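/- For a TU cost game (N,c) with empty core, the cost of stability δ_CoS = c(N) - max{ x(N) : x(S) ≤ c(S) for all S ⊆ N } equals n · ε_w*, where ε_w* is the smallest ε ≥ 0 such that the weak ε-core { x : x(S) ≤ c(S) + ε·|S| for all S ⊊ N, x(N) = c(N) } is non-empty. -/
import Mathlib


open Finset

/-- For a TU cost game with empty core, the cost of stability
`δ_CoS = c(N) - max{x(N) : x(S) ≤ c(S) ∀ S ⊆ N}` equals `n · ε_w*`, where `ε_w*` is the
smallest ε ≥ 0 such that the weak ε-core is non-empty. -/
theorem cost_of_stability_eq_weak_core {n : ℕ} (c : Finset (Fin n) → ℝ)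
    (hc : ∀ S, 0 ≤ c S)
    (hempty : ¬ ∃ x : Fin n → ℝ,
      (∀ S : Finset (Fin n), S ⊂ univ → ∑ i ∈ S, x i ≤ c S) ∧
      ∑ i, x i = c univ)
    (m εw : ℝ)
    (hm : IsGreatest {v : ℝ | ∃ x : Fin n → ℝ,
      (∀ S : Finset (Fin n), ∑ i ∈ S, x i ≤ c S) ∧ v = ∑ i, x i} m)
    (hεw : IsLeast {ε : ℝ | 0 ≤ ε ∧ ∃ x : Fin n → ℝ,
      (∀ S : Finset (Fin n), S ⊂ univ → ∑ i ∈ S, x i ≤ c S + ε * S.card) ∧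
      ∑ i, x i = c univ} εw) :
    c univ - m = n * εw := by
  obtain ⟨⟨x, hx, hxm⟩, hmax⟩ := hm
  obtain ⟨⟨hε0, y, hy, hysum⟩, hleast⟩ := hεw
  have hmle : m ≤ c univ := by
    have := hx univ
    linarith [hxm ▸ this]
  have hcardu : ((univ : Finset (Fin n)).card : ℝ) = n := by
    simp [Finset.card_univ]
  -- Ineq B : c univ - n * εw ≤ m
  have hB : c univ - n * εw ≤ m := by
    apply hmax
    refine ⟨fun i => y i - εw, ?_, ?_⟩
    · intro S
      have hsum : ∑ i ∈ S, (y i - εw) = ∑ i ∈ S, y i - S.card * εw := by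
        rw [Finset.sum_sub_distrib]
        simp [mul_comm]
      rcases eq_or_ne S univ with rfl | hS
      · rw [hsum, hysum, hcardu]
        have : (0:ℝ) ≤ n * εw := by positivity
        linarith
      · have hlt : S ⊂ univ := lt_of_le_of_ne (subset_univ S) hS
        have := hy S hlt
        rw [hsum]
        linarith
    · rw [Finset.sum_sub_distrib]
      simp [hysum, hcardu, mul_comm]
  -- Ineq A : n * εw ≤ c univ - m
  have hA : n * εw ≤ c univ - m := by
    rcases Nat.eq_zero_or_pos n with h0 | hn
    · subst h0; simpa using hmle
    · have hnn : (0:ℝ) < n := by exact_mod_cast hn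
      set d : ℝ := (c univ - m) / n with hd
      have hd0 : 0 ≤ d := div_nonneg (by linarith) hnn.le
      have hεd : εw ≤ d := by
        apply hleast
        refine ⟨hd0, fun i => x i + d, ?_, ?_⟩
        · intro S hS
          have hsum : ∑ i ∈ S, (x i + d) = ∑ i ∈ S, x i + S.card * d := by
            rw [Finset.sum_add_distrib]
            simp [mul_comm]
          have := hx S
          rw [hsum]
          linarith
        · rw [Finset.sum_add_distrib]
          simp only [Finset.sum_const, Finset.card_univ, Fintype.card_fin, nsmul_eq_mul]
          rw [mul_div_cancel₀ _ hnn.ne']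
          linarith [hxm]
      calc (n:ℝ) * εw ≤ n * d := by nlinarith
        _ = c univ - m := by rw [hd, mul_div_cancel₀ _ hnn.ne']
  linarith
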